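/- For every q ∈ (0,1) there exist C > 0 and ε_0 > 0 such that for all ε ∈ (0, ε_0) and all x ∈ (0,1]: if |h(x) − h(q) − q·log(q)·(log x − log q)| ≤ ε³, then there exists x_0 ∈ (0,1] with h(x_0) = h(q) + q·log(q)·(log x_0 − log q) and |x − x_0| ≤ C·ε. -/

import Mathlib

open scoped BigOperators

attribute [local instance] Classical.propDecidable

noncomputable section

namespace LowerTails

/-- The edge set of the complete graph `K_n`: unordered pairs of distinct elements of `Fin n`. -/
abbrev Edge (n : ℕ) := {e : Sym2 (Fin n) // ¬ e.IsDiag}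

/-- A graph on `[n]`, identified with its edge-indicator vector in `{0,1}^{E(K_n)}`. -/
abbrev EGraph (n : ℕ) := Edge n → Bool

/-- The probability of the configuration `G` under the product measure where edge `e`
is present independently with probability `q e`. -/
def wt {n : ℕ} (q : Edge n → ℝ) (G : EGraph n) : ℝ :=
  ∏ e : Edge n, if G e then q e else 1 - q e

/-- Probability of the event `S` under `G(n, q)`. -/
def pr {n : ℕ} (q : Edge n → ℝ) (S : Set (EGraph n)) : ℝ :=
  ∑ G : EGraph n, if G ∈ S then wt q G else 0

/-- Conditional probability of `S` given `L` under `G(n, q)`. -/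
def cpr {n : ℕ} (q : Edge n → ℝ) (L S : Set (EGraph n)) : ℝ :=
  pr q (S ∩ L) / pr q L

/-- Conditional expectation of `f` given the event `L` under `G(n, q)`. -/
def cex {n : ℕ} (q : Edge n → ℝ) (L : Set (EGraph n)) (f : EGraph n → ℝ) : ℝ :=
  (∑ G : EGraph n, if G ∈ L then wt q G * f G else 0) / pr q L

/-- The simple graph on `Fin n` associated to an edge-indicator vector. -/
def toSG {n : ℕ} (G : EGraph n) : SimpleGraph (Fin n) :=
  SimpleGraph.fromEdgeSet {e : Sym2 (Fin n) | ∃ h : ¬e.IsDiag, G ⟨e, h⟩ = true}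

/-- The number of copies of `H` in `G`, i.e. the number of subgraphs of `G` isomorphic to `H`. -/
def countCopies {k n : ℕ} (H : SimpleGraph (Fin k)) (G : SimpleGraph (Fin n)) : ℕ :=
  Set.ncard {K : G.Subgraph | Nonempty (H ≃g K.coe)}

/-- `N_H(G)` for an edge-indicator vector `G`, as a real number. -/
def NH {k n : ℕ} (H : SimpleGraph (Fin k)) (G : EGraph n) : ℝ :=
  countCopies H (toSG G)

/-- `E[N_H(q)]`, the expected number of copies of `H` in `G(n, q)`. -/
def expNH {k : ℕ} (H : SimpleGraph (Fin k)) {n : ℕ} (q : Edge n → ℝ) : ℝ :=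
  ∑ G : EGraph n, wt q G * NH H G

/-- `N_H(K_n)`, the number of copies of `H` in the complete graph `K_n`. -/
def NHKn {k : ℕ} (H : SimpleGraph (Fin k)) (n : ℕ) : ℝ :=
  countCopies H (⊤ : SimpleGraph (Fin n))

/-- The lower tail event `L_p(H, η) = {G : N_H(G) ≤ η E[N_H(p)]}`. -/
def lowerTail {k : ℕ} (H : SimpleGraph (Fin k)) (n : ℕ) (p η : ℝ) : Set (EGraph n) :=
  {G | NH H G ≤ η * expNH H (fun _ : Edge n => p)}

/-- `h(x) = x log x - x + 1` (with `h(0) = 1` since `Real.log 0 = 0`). -/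
def hfun (x : ℝ) : ℝ := x * Real.log x - x + 1

/-- The relative entropy `i_p(t)` of `Ber(t)` with respect to `Ber(p)`. -/
def ip (p t : ℝ) : ℝ := t * Real.log (t / p) + (1 - t) * Real.log ((1 - t) / (1 - p))

/-- The number of edges of `H` as a real number. -/
def eH {k : ℕ} (H : SimpleGraph (Fin k)) : ℝ := H.edgeSet.ncard

/-- The defining equation of the threshold `η_H`, for a graph with `e` edges. -/
def etaEq (e η : ℝ) : Prop :=
  hfun (η ^ (1 / η)) =
    hfun (η ^ (1 / e)) + η ^ (1 / e) * Real.log (η ^ (1 / e)) *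
      (Real.log (η ^ (1 / η)) - Real.log (η ^ (1 / e)))

/-- The 2-density `m_2(H)`. -/
def m2 {k : ℕ} (H : SimpleGraph (Fin k)) : ℝ :=
  sSup {x : ℝ | ∃ F : H.Subgraph, 2 ≤ F.edgeSet.ncard ∧
    x = ((F.edgeSet.ncard : ℝ) - 1) / ((F.verts.ncard : ℝ) - 2)}

/-- The variational problem `Φ_p(H, η)`. -/
def PhiP {k : ℕ} (H : SimpleGraph (Fin k)) (n : ℕ) (p η : ℝ) : ℝ :=
  sInf {x : ℝ | ∃ q : Edge n → ℝ, (∀ e, q e ∈ Set.Icc (0:ℝ) 1) ∧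
    expNH H q ≤ η * expNH H (fun _ : Edge n => p) ∧ x = ∑ e : Edge n, ip p (q e)}

/-- The sparse limit variational problem `Φ(H, η)`. -/
def Phi {k : ℕ} (H : SimpleGraph (Fin k)) (n : ℕ) (η : ℝ) : ℝ :=
  sInf {x : ℝ | ∃ q : Edge n → ℝ, (∀ e, q e ∈ Set.Icc (0:ℝ) 1) ∧
    expNH H q ≤ η * NHKn H n ∧ x = ∑ e : Edge n, hfun (q e)}

/-- The cut norm of an `n × n` real matrix. -/
def cutNorm {n : ℕ} (M : Matrix (Fin n) (Fin n) ℝ) : ℝ :=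
  sSup {x : ℝ | ∃ a b : Fin n → ℝ, (∀ i, a i ∈ Set.Icc (0:ℝ) 1) ∧ (∀ i, b i ∈ Set.Icc (0:ℝ) 1) ∧
    x = |∑ i : Fin n, ∑ j : Fin n, a i * M i j * b j| / (n : ℝ) ^ 2}

/-- The symmetric matrix with entries `q_{ij} - c` off the diagonal, `0` on the diagonal. -/
def devMat {n : ℕ} (q : Edge n → ℝ) (c : ℝ) : Matrix (Fin n) (Fin n) ℝ :=
  fun i j => if h : i = j then 0 else q ⟨s(i, j), by simp [Sym2.mk_isDiag_iff, h]⟩ - c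

/-- The edge-indicator vector of `G` as a real vector. -/
def ind {n : ℕ} (G : EGraph n) : Edge n → ℝ := fun e => if G e then 1 else 0

/-- `Y_A = ∏_{e ∈ A} Y_e`. -/
def YA {n : ℕ} (A : Finset (Edge n)) (G : EGraph n) : ℝ :=
  ∏ e ∈ A, (if G e then (1:ℝ) else 0)

/-- The event that a configuration agrees with `G0` on the set `W`. -/
def agreeOn {n : ℕ} (W : Finset (Edge n)) (G0 : EGraph n) : Set (EGraph n) :=
  {G | ∀ w ∈ W, G w = G0 w}

/-- The conditional expectation `E[f | (Y_w)_{w ∈ W}]` under the pmf `μ`, evaluated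
at the outcome `G0` (i.e. given that `Y` agrees with `G0` on `W`). -/
def condExpW {n : ℕ} (μ : EGraph n → ℝ) (W : Finset (Edge n)) (f : EGraph n → ℝ)
    (G0 : EGraph n) : ℝ :=
  (∑ G : EGraph n, if G ∈ agreeOn W G0 then μ G * f G else 0) /
    (∑ G : EGraph n, if G ∈ agreeOn W G0 then μ G else 0)

/-- The pmf of `G(n, p)` conditioned on the lower tail event `L_p(H, η)`. -/
def ltPMF {k : ℕ} (H : SimpleGraph (Fin k)) (n : ℕ) (p η : ℝ) : EGraph n → ℝ :=
  fun G => (if G ∈ lowerTail H n p η then wt (fun _ : Edge n => p) G else 0) /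
    pr (fun _ : Edge n => p) (lowerTail H n p η)

/-- The hyperedges of the hypergraph `H(H)`: edge sets of copies of `H` in `K_n`. -/
def copySets {k : ℕ} (H : SimpleGraph (Fin k)) (n : ℕ) : Finset (Finset (Edge n)) :=
  Finset.univ.filter (fun A => ∃ f : Fin k ↪ Fin n,
    ∀ e : Edge n, e ∈ A ↔ ∃ u v : Fin k, H.Adj u v ∧ (e : Sym2 (Fin n)) = s(f u, f v))

/-- The correlation `D_W(B, b)` as a random variable (a function of the outcome `G0`). -/
def DW {n : ℕ} (μ : EGraph n → ℝ) (W : Finset (Edge n)) (B : Finset (Edge n)) (b : Edge n)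
    (G0 : EGraph n) : ℝ :=
  condExpW μ W (YA B) G0 - condExpW μ W (YA (B.erase b)) G0 * condExpW μ W (YA {b}) G0

/-- The energy `E_H(W)` of a set `W` with respect to the pmf `μ`. -/
def energy {k n : ℕ} (H : SimpleGraph (Fin k)) (μ : EGraph n → ℝ) (p : ℝ)
    (W : Finset (Edge n)) : ℝ :=
  ∑ G0 : EGraph n, μ G0 *
    ∑ A ∈ (copySets H n).filter (fun A => Disjoint A W),
      ∑ B ∈ A.powerset.filter (fun B => 2 ≤ B.card),
        ∑ b ∈ B, (DW μ W B b G0) ^ 2 /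
          ((Nat.choose H.edgeSet.ncard B.card : ℝ) * (B.card : ℝ) * p ^ (2 * B.card))

end LowerTails

namespace LowerTails

open Set

/-- Two-point monotonicity from a nonnegative derivative. -/
lemma two_point_mono {F F' : ℝ → ℝ} {s t : ℝ} (hst : s ≤ t)
    (hF : ∀ y ∈ Set.Icc s t, HasDerivAt F (F' y) y)
    (h0 : ∀ y ∈ Set.Icc s t, 0 ≤ F' y) : F s ≤ F t := by
  have hmono : MonotoneOn F (Set.Icc s t) := by
    apply monotoneOn_of_deriv_nonneg (convex_Icc s t)
    · exact fun y hy => (hF y hy).continuousAt.continuousWithinAt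
    · intro y hy
      rw [interior_Icc] at hy
      exact (hF y (Ioo_subset_Icc_self hy)).differentiableAt.differentiableWithinAt
    · intro y hy
      rw [interior_Icc] at hy
      rw [(hF y (Ioo_subset_Icc_self hy)).deriv]
      exact h0 y (Ioo_subset_Icc_self hy)
  exact hmono (left_mem_Icc.2 hst) (right_mem_Icc.2 hst) hst

/-- If the derivative is monotone on `[s,t]`, the function is below the max of endpoints. -/
lemma le_max_endpoints {F F' : ℝ → ℝ} {s t : ℝ}
    (hF : ∀ y ∈ Set.Icc s t, HasDerivAt F (F' y) y)
    (hmono : ∀ ⦃y z : ℝ⦄, y ∈ Set.Icc s t → z ∈ Set.Icc s t → y ≤ z → F' y ≤ F' z)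
    {y : ℝ} (hy : y ∈ Set.Icc s t) : F y ≤ max (F s) (F t) := by
  by_contra hc
  push_neg at hc
  have hs : s < y := by
    rcases eq_or_lt_of_le hy.1 with h | h
    · exfalso; rw [← h] at hc; exact absurd (le_max_left (F s) (F t)) (not_le.2 hc)
    · exact h
  have ht : y < t := by
    rcases eq_or_lt_of_le hy.2 with h | h
    · exfalso; rw [h] at hc; exact absurd (le_max_right (F s) (F t)) (not_le.2 hc)
    · exact h
  have hsub1 : Set.Icc s y ⊆ Set.Icc s t := Icc_subset_Icc le_rfl hy.2
  have hsub2 : Set.Icc y t ⊆ Set.Icc s t := Icc_subset_Icc hy.1 le_rfl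
  obtain ⟨c1, hc1, hc1'⟩ := exists_hasDerivAt_eq_slope F F' hs
    (fun z hz => (hF z (hsub1 hz)).continuousAt.continuousWithinAt)
    (fun z hz => hF z (hsub1 (Ioo_subset_Icc_self hz)))
  obtain ⟨c2, hc2, hc2'⟩ := exists_hasDerivAt_eq_slope F F' ht
    (fun z hz => (hF z (hsub2 hz)).continuousAt.continuousWithinAt)
    (fun z hz => hF z (hsub2 (Ioo_subset_Icc_self hz)))
  have h1 : 0 < F' c1 := by
    rw [hc1']
    apply div_pos _ (by linarith [hc1.1, hc1.2])
    have := hc.trans_le' (le_max_left (F s) (F t))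
    linarith
  have h2 : F' c2 < 0 := by
    rw [hc2']
    apply div_neg_of_neg_of_pos _ (by linarith [hc2.1, hc2.2])
    have := hc.trans_le' (le_max_right (F s) (F t))
    linarith
  have hle : F' c1 ≤ F' c2 :=
    hmono (hsub1 (Ioo_subset_Icc_self hc1)) (hsub2 (Ioo_subset_Icc_self hc2))
      (le_of_lt (hc1.2.trans hc2.1))
  linarith

lemma min_endpoints_le {F F' : ℝ → ℝ} {s t : ℝ}
    (hF : ∀ y ∈ Set.Icc s t, HasDerivAt F (F' y) y)
    (hanti : ∀ ⦃y z : ℝ⦄, y ∈ Set.Icc s t → z ∈ Set.Icc s t → y ≤ z → F' z ≤ F' y)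
    {y : ℝ} (hy : y ∈ Set.Icc s t) : min (F s) (F t) ≤ F y := by
  have := le_max_endpoints (F := fun z => -F z) (F' := fun z => -F' z)
    (fun z hz => (hF z hz).neg) (fun y z hy hz hyz => neg_le_neg (hanti hy hz hyz)) hy
  have h3 : -F y ≤ -min (F s) (F t) := by simpa [max_neg_neg] using this
  linarith


/-- `G q x` is the defect of the tangent-line equation. -/
noncomputable def G (q x : ℝ) : ℝ :=
  hfun x - hfun q - q * Real.log q * (Real.log x - Real.log q)

noncomputable def Gd (q x : ℝ) : ℝ := Real.log x - q * Real.log q * x⁻¹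

noncomputable def Gdd (q x : ℝ) : ℝ := x⁻¹ + q * Real.log q * (x ^ 2)⁻¹

lemma hasDerivAt_G (q : ℝ) {x : ℝ} (hx : 0 < x) : HasDerivAt (G q) (Gd q x) x := by
  have h1 : HasDerivAt hfun (Real.log x) x := by
    have := ((Real.hasDerivAt_mul_log hx.ne').sub (hasDerivAt_id x)).add_const 1
    exact this.congr_deriv (by ring)
  have h2 : HasDerivAt (fun z => q * Real.log q * (Real.log z - Real.log q))
      (q * Real.log q * x⁻¹) x := by
    simpa using ((Real.hasDerivAt_log hx.ne').sub_const (Real.log q)).const_mul (q * Real.log q)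
  have := (h1.sub_const (hfun q)).sub h2
  exact this

lemma hasDerivAt_Gd (q : ℝ) {x : ℝ} (hx : 0 < x) : HasDerivAt (Gd q) (Gdd q x) x := by
  have h2 : HasDerivAt (fun z : ℝ => q * Real.log q * z⁻¹)
      (q * Real.log q * (-(x ^ 2)⁻¹)) x := (hasDerivAt_inv hx.ne').const_mul _
  have := (Real.hasDerivAt_log hx.ne').sub h2
  have h3 : x⁻¹ - q * Real.log q * (-(x ^ 2)⁻¹) = Gdd q x := by simp only [Gdd]; ring
  rw [h3] at this
  exact this

lemma G_q (q : ℝ) : G q q = 0 := by simp [G]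

lemma Gd_q {q : ℝ} (hq : 0 < q) : Gd q q = 0 := by
  rw [Gd, mul_comm q, mul_assoc, mul_inv_cancel₀ hq.ne', mul_one, sub_self]

section
variable {q : ℝ} (hq0 : 0 < q) (hq1 : q < 1)

include hq0 hq1

lemma w_pos : 0 < -(q * Real.log q) := by
  have : Real.log q < 0 := Real.log_neg hq0 hq1
  nlinarith

omit hq1 in
lemma w_lt_one : -(q * Real.log q) < 1 := by
  have h := Real.log_le_sub_one_of_pos (x := q⁻¹) (by positivity)
  rw [Real.log_inv] at h
  have : -Real.log q ≤ q⁻¹ - 1 := h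
  have h2 : -(q * Real.log q) ≤ q * (q⁻¹ - 1) := by nlinarith
  have h3 : q * (q⁻¹ - 1) = 1 - q := by field_simp
  nlinarith

lemma Gdd_ge {z : ℝ} (hz : 0 < z) (hz1 : z ≤ 1) (hza : 0 ≤ z + q * Real.log q) :
    z + q * Real.log q ≤ Gdd q z := by
  have h : Gdd q z - (z + q * Real.log q)
      = (z + q * Real.log q) * (1 - z ^ 2) / z ^ 2 := by
    rw [Gdd]
    field_simp
  nlinarith [sq_nonneg z, mul_pos hz hz, div_nonneg (mul_nonneg hza (by nlinarith : (0:ℝ) ≤ 1 - z ^ 2)) (le_of_lt (by positivity : (0:ℝ) < z ^ 2))]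

lemma Gdd_le {z : ℝ} (hz : 0 < z) (hz1 : z ≤ 1) (hza : z + q * Real.log q ≤ 0) :
    Gdd q z ≤ z + q * Real.log q := by
  have h : (z + q * Real.log q) - Gdd q z
      = -((z + q * Real.log q) * (1 - z ^ 2)) / z ^ 2 := by
    rw [Gdd]
    field_simp
    ring
  have hp : (z + q * Real.log q) * (1 - z ^ 2) ≤ 0 :=
    mul_nonpos_of_nonpos_of_nonneg hza (by nlinarith)
  nlinarith [div_nonneg (by linarith : (0:ℝ) ≤ -((z + q * Real.log q) * (1 - z ^ 2))) (le_of_lt (by positivity : (0:ℝ) < z ^ 2))]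


omit hq0 hq1 in
lemma deriv_sq {c z : ℝ} : HasDerivAt (fun z : ℝ => (z - c) ^ 2 / 2) (z - c) z := by
  have h := (((hasDerivAt_id z).sub_const c).pow 2).div_const 2
  refine h.congr_deriv ?_
  norm_num

omit hq0 hq1 in
lemma deriv_cube {c z : ℝ} : HasDerivAt (fun z : ℝ => (z - c) ^ 3 / 6) ((z - c) ^ 2 / 2) z := by
  have h := (((hasDerivAt_id z).sub_const c).pow 3).div_const 6
  refine h.congr_deriv ?_
  norm_num
  ring

omit hq0 hq1 in
lemma deriv_sq' {c z : ℝ} : HasDerivAt (fun z : ℝ => (c - z) ^ 2 / 2) (-(c - z)) z := by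
  have h : (fun z : ℝ => (c - z) ^ 2 / 2) = fun z : ℝ => (z - c) ^ 2 / 2 := by
    funext y; ring
  rw [h]
  have := deriv_sq (c := c) (z := z)
  convert this using 1
  ring

omit hq0 hq1 in
lemma deriv_cube' {c z : ℝ} : HasDerivAt (fun z : ℝ => (c - z) ^ 3 / 6) (-((c - z) ^ 2 / 2)) z := by
  have h : (fun z : ℝ => (c - z) ^ 3 / 6) = fun z : ℝ => -((z - c) ^ 3 / 6) := by
    funext y; ring
  rw [h]
  have := (deriv_cube (c := c) (z := z)).neg
  refine this.congr_deriv ?_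
  ring

include hq0 hq1

lemma goodA (hw : -(q * Real.log q) ≤ q) :
    ∃ δ > (0:ℝ), ∀ ε ∈ Set.Ioo (0:ℝ) δ, ∀ x ∈ Set.Icc q 1,
      |G q x| ≤ ε ^ 3 → ∃ x0 ∈ Set.Ioc (0:ℝ) 1, G q x0 = 0 ∧ |x - x0| ≤ 2 * ε := by
  refine ⟨1, one_pos, ?_⟩
  intro ε hε x hx hgx
  have step1 : ∀ y ∈ Set.Icc q x, (y - q) ^ 2 / 2 ≤ Gd q y := by
    intro y hy
    have h := two_point_mono (s := q) (t := y) hy.1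
      (F := fun z => Gd q z - (z - q) ^ 2 / 2) (F' := fun z => Gdd q z - (z - q))
      (fun z hz => (hasDerivAt_Gd q (lt_of_lt_of_le hq0 hz.1)).sub deriv_sq)
      (fun z hz => by
        show 0 ≤ Gdd q z - (z - q)
        have hz0 : 0 < z := lt_of_lt_of_le hq0 hz.1
        have hz1 : z ≤ 1 := le_trans hz.2 (le_trans hy.2 hx.2)
        have h1 : 0 ≤ z + q * Real.log q := by linarith [hz.1]
        have := Gdd_ge hq0 hq1 hz0 hz1 h1
        have h2 : z - q ≤ z + q * Real.log q := by linarith [hz.1]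
        linarith)
    have h' : Gd q q - (q - q) ^ 2 / 2 ≤ Gd q y - (y - q) ^ 2 / 2 := h
    rw [Gd_q hq0] at h'
    nlinarith [h']
  have step2 := two_point_mono (s := q) (t := x) hx.1
    (F := fun z => G q z - (z - q) ^ 3 / 6) (F' := fun z => Gd q z - (z - q) ^ 2 / 2)
    (fun z hz => (hasDerivAt_G q (lt_of_lt_of_le hq0 hz.1)).sub deriv_cube)
    (fun z hz => by
      show 0 ≤ Gd q z - (z - q) ^ 2 / 2
      have := step1 z hz; linarith)
  have step2' : G q q - (q - q) ^ 3 / 6 ≤ G q x - (x - q) ^ 3 / 6 := step2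
  rw [G_q] at step2'
  have hcube : (x - q) ^ 3 ≤ (2 * ε) ^ 3 := by
    have := le_abs_self (G q x)
    nlinarith [pow_pos hε.1 3]
  have := le_of_pow_le_pow_left₀ (by norm_num) (by linarith [hε.1] : (0:ℝ) ≤ 2 * ε) hcube
  exact ⟨q, ⟨hq0, le_of_lt hq1⟩, G_q q, by rw [abs_of_nonneg (by linarith [hx.1])]; linarith⟩

lemma goodB (hw : q ≤ -(q * Real.log q)) :
    ∃ δ > (0:ℝ), ∀ ε ∈ Set.Ioo (0:ℝ) δ, ∀ x ∈ Set.Ioc 0 q,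
      |G q x| ≤ ε ^ 3 → ∃ x0 ∈ Set.Ioc (0:ℝ) 1, G q x0 = 0 ∧ |x - x0| ≤ 2 * ε := by
  refine ⟨1, one_pos, ?_⟩
  intro ε hε x hx hgx
  have step1 : ∀ y ∈ Set.Icc x q, (q - y) ^ 2 / 2 ≤ Gd q y := by
    intro y hy
    have h := two_point_mono (s := y) (t := q) hy.2
      (F := fun z => -(Gd q z - (q - z) ^ 2 / 2)) (F' := fun z => -(Gdd q z + (q - z)))
      (fun z hz => by
        have hz0 : 0 < z := lt_of_lt_of_le hx.1 (le_trans hy.1 hz.1)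
        have h2 := ((hasDerivAt_Gd q hz0).sub (deriv_sq' (c := q) (z := z))).neg
        show HasDerivAt (fun z => -(Gd q z - (q - z) ^ 2 / 2)) (-(Gdd q z + (q - z))) z
        refine h2.congr_deriv ?_
        ring)
      (fun z hz => by
        show 0 ≤ -(Gdd q z + (q - z))
        have hz0 : 0 < z := lt_of_lt_of_le hx.1 (le_trans hy.1 hz.1)
        have hz1 : z ≤ 1 := le_trans hz.2 (le_of_lt hq1)
        have h1 : z + q * Real.log q ≤ 0 := by linarith [hz.2]
        have := Gdd_le hq0 hq1 hz0 hz1 h1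
        have h2 : z + q * Real.log q ≤ z - q := by linarith [hz.2]
        linarith)
    have h' : -(Gd q y - (q - y) ^ 2 / 2) ≤ -(Gd q q - (q - q) ^ 2 / 2) := h
    rw [Gd_q hq0] at h'
    nlinarith [h']
  have step2 := two_point_mono (s := x) (t := q) hx.2
    (F := fun z => G q z + (q - z) ^ 3 / 6) (F' := fun z => Gd q z - (q - z) ^ 2 / 2)
    (fun z hz => by
      have hz0 : 0 < z := lt_of_lt_of_le hx.1 hz.1
      have h2 := (hasDerivAt_G q hz0).add (deriv_cube' (c := q) (z := z))
      show HasDerivAt (fun z => G q z + (q - z) ^ 3 / 6) (Gd q z - (q - z) ^ 2 / 2) z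
      exact h2.congr_deriv (by ring))
    (fun z hz => by
      show 0 ≤ Gd q z - (q - z) ^ 2 / 2
      have := step1 z hz; linarith)
  have step2' : G q x + (q - x) ^ 3 / 6 ≤ G q q + (q - q) ^ 3 / 6 := step2
  rw [G_q] at step2'
  have hcube : (q - x) ^ 3 ≤ (2 * ε) ^ 3 := by
    have := neg_abs_le (G q x)
    nlinarith [pow_pos hε.1 3]
  have := le_of_pow_le_pow_left₀ (by norm_num) (by linarith [hε.1] : (0:ℝ) ≤ 2 * ε) hcube
  exact ⟨q, ⟨hq0, le_of_lt hq1⟩, G_q q, by rw [abs_of_nonpos (by linarith [hx.2])]; linarith⟩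


omit hq0 hq1 in
lemma deriv_lin {c d z : ℝ} : HasDerivAt (fun z : ℝ => c * (z - d)) c z := by
  have h := ((hasDerivAt_id z).sub_const d).const_mul c
  refine h.congr_deriv ?_
  ring

set_option maxHeartbeats 1000000 in
lemma goodC (hw : -(q * Real.log q) < q) :
    ∃ δ > (0:ℝ), ∀ ε ∈ Set.Ioo (0:ℝ) δ, ∀ x ∈ Set.Ioc 0 q,
      |G q x| ≤ ε ^ 3 → ∃ x0 ∈ Set.Ioc (0:ℝ) 1, G q x0 = 0 ∧ |x - x0| ≤ 2 * ε := by
  have hw0 : 0 < -(q * Real.log q) := w_pos hq0 hq1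
  have hw1 : -(q * Real.log q) < 1 := w_lt_one hq0
  set w := -(q * Real.log q) with hwdef
  have haw : q * Real.log q = -w := by rw [hwdef]; ring
  have haneg : q * Real.log q < 0 := by rw [haw]; linarith
  set m := (q + w) / 2 with hmdef
  set c3 := (q - w) / 2 with hc3def
  have hc3pos : 0 < c3 := by rw [hc3def]; linarith
  have hm_lt_q : m < q := by rw [hmdef]; linarith
  have hw_lt_m : w < m := by rw [hmdef]; linarith
  have hm_pos : 0 < m := by linarith
  have hm_le_1 : m ≤ 1 := by linarith
  have hqm : q - m = c3 := by rw [hmdef, hc3def]; ring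
  -- step 1: Gd is ≤ -(c3 * (q - y)) on [m, q]
  have C1d : ∀ y ∈ Set.Icc m q, Gd q y ≤ -(c3 * (q - y)) := by
    intro y hy
    have h := two_point_mono (s := y) (t := q) hy.2
      (F := fun z => Gd q z - c3 * (z - q)) (F' := fun z => Gdd q z - c3)
      (fun z hz => by
        have hz0 : 0 < z := lt_of_lt_of_le hm_pos (le_trans hy.1 hz.1)
        exact (hasDerivAt_Gd q hz0).sub deriv_lin)
      (fun z hz => by
        show 0 ≤ Gdd q z - c3
        have hz0 : 0 < z := lt_of_lt_of_le hm_pos (le_trans hy.1 hz.1)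
        have hz1 : z ≤ 1 := le_trans hz.2 (le_of_lt hq1)
        have h1 : 0 ≤ z + q * Real.log q := by
          rw [haw]; linarith [le_trans hy.1 hz.1]
        have h2 := Gdd_ge hq0 hq1 hz0 hz1 h1
        rw [haw] at h2
        linarith [le_trans hy.1 hz.1])
    have h' : Gd q y - c3 * (y - q) ≤ Gd q q - c3 * (q - q) := h
    rw [Gd_q hq0] at h'
    nlinarith [h']
  -- step 2: quadratic lower bound for G on [m, q]
  have C1 : ∀ y ∈ Set.Icc m q, c3 * (q - y) ^ 2 / 2 ≤ G q y := by
    intro y hy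
    have h := two_point_mono (s := y) (t := q) hy.2
      (F := fun z => -(G q z - c3 * ((q - z) ^ 2 / 2)))
      (F' := fun z => -(Gd q z + c3 * (q - z)))
      (fun z hz => by
        have hz0 : 0 < z := lt_of_lt_of_le hm_pos (le_trans hy.1 hz.1)
        have h2 := ((hasDerivAt_G q hz0).sub ((deriv_sq' (c := q) (z := z)).const_mul c3)).neg
        show HasDerivAt (fun z => -(G q z - c3 * ((q - z) ^ 2 / 2))) (-(Gd q z + c3 * (q - z))) z
        refine h2.congr_deriv ?_
        ring)
      (fun z hz => by
        show 0 ≤ -(Gd q z + c3 * (q - z))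
        have := C1d z ⟨le_trans hy.1 hz.1, hz.2⟩
        linarith)
    have h' : -(G q y - c3 * ((q - y) ^ 2 / 2)) ≤ -(G q q - c3 * ((q - q) ^ 2 / 2)) := h
    rw [G_q] at h'
    nlinarith [h']
  -- Gd is antitone on (0, w]
  have hGdanti : ∀ y z : ℝ, 0 < y → y ≤ z → z ≤ w → Gd q z ≤ Gd q y := by
    intro y z h1 h2 h3
    have h := two_point_mono (s := y) (t := z) h2
      (F := fun u => -(Gd q u)) (F' := fun u => -(Gdd q u))
      (fun u hu => (hasDerivAt_Gd q (lt_of_lt_of_le h1 hu.1)).neg)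
      (fun u hu => by
        show 0 ≤ -(Gdd q u)
        have hu0 : 0 < u := lt_of_lt_of_le h1 hu.1
        have hu1 : u ≤ 1 := le_trans hu.2 (le_trans h3 (le_of_lt hw1))
        have h4 : u + q * Real.log q ≤ 0 := by rw [haw]; linarith [hu.2]
        have := Gdd_le hq0 hq1 hu0 hu1 h4
        rw [haw] at this
        linarith [hu.2])
    have h' : -(Gd q y) ≤ -(Gd q z) := h
    linarith
  -- Gd ≤ 0 on [w, q]
  have hgd_le : ∀ y ∈ Set.Icc w q, Gd q y ≤ 0 := by
    intro y hy
    have h := two_point_mono (s := y) (t := q) hy.2 (F := Gd q) (F' := Gdd q)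
      (fun z hz => hasDerivAt_Gd q (lt_of_lt_of_le hw0 (le_trans hy.1 hz.1)))
      (fun z hz => by
        have hz0 : 0 < z := lt_of_lt_of_le hw0 (le_trans hy.1 hz.1)
        have hz1 : z ≤ 1 := le_trans hz.2 (le_of_lt hq1)
        have h1 : 0 ≤ z + q * Real.log q := by rw [haw]; linarith [le_trans hy.1 hz.1]
        have := Gdd_ge hq0 hq1 hz0 hz1 h1
        linarith)
    rw [Gd_q hq0] at h
    exact h
  -- G is antitone on [w, q]
  have hganti : ∀ s t : ℝ, w ≤ s → s ≤ t → t ≤ q → G q t ≤ G q s := by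
    intro s t h1 h2 h3
    have h := two_point_mono (s := s) (t := t) h2
      (F := fun z => -(G q z)) (F' := fun z => -(Gd q z))
      (fun z hz => (hasDerivAt_G q (lt_of_lt_of_le hw0 (le_trans h1 hz.1))).neg)
      (fun z hz => by
        show 0 ≤ -(Gd q z)
        have := hgd_le z ⟨le_trans h1 hz.1, le_trans hz.2 h3⟩
        linarith)
    have h' : -(G q s) ≤ -(G q t) := h
    linarith
  have hGm : c3 ^ 3 / 2 ≤ G q m := by
    have := C1 m ⟨le_refl m, le_of_lt hm_lt_q⟩
    rw [hqm] at this
    nlinarith [this]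
  have hGw : c3 ^ 3 / 2 ≤ G q w :=
    le_trans hGm (hganti w m (le_refl w) (le_of_lt hw_lt_m) (le_of_lt hm_lt_q))
  have hc6pos : 0 < c3 ^ 3 / 2 := by positivity
  -- the point lo with G q lo < 0
  set K := 1 - hfun q + q * Real.log q * Real.log q with hKdef
  set lo := min (w / 2) (Real.exp (K / (q * Real.log q) - 1)) with hlodef
  have hlo_pos : 0 < lo := lt_min (by linarith) (Real.exp_pos _)
  have hlo_lt_w : lo < w := lt_of_le_of_lt (min_le_left _ _) (by linarith)
  have hlo_le_1 : lo ≤ 1 := by linarith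
  have hGlo : G q lo < 0 := by
    have hlog_le : Real.log lo ≤ K / (q * Real.log q) - 1 := by
      have h1 : lo ≤ Real.exp (K / (q * Real.log q) - 1) := min_le_right _ _
      have := Real.log_le_log hlo_pos h1
      rwa [Real.log_exp] at this
    have h2 : (-(q * Real.log q)) * Real.log lo ≤ -K + q * Real.log q := by
      have h3 := mul_le_mul_of_nonneg_left hlog_le (by linarith : (0:ℝ) ≤ -(q * Real.log q))
      have hne : q * Real.log q ≠ 0 := ne_of_lt haneg
      have h4 : (-(q * Real.log q)) * (K / (q * Real.log q) - 1) = -K + q * Real.log q := by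
        have e : q * Real.log q * (K / (q * Real.log q)) = K := by
          rw [mul_div_assoc', mul_div_right_comm, div_self hne, one_mul]
        linear_combination -e
      linarith
    have hlolog : lo * Real.log lo ≤ 0 :=
      mul_nonpos_of_nonneg_of_nonpos (le_of_lt hlo_pos) (Real.log_nonpos (le_of_lt hlo_pos) hlo_le_1)
    have hG : G q lo = lo * Real.log lo - lo + (K + (-(q * Real.log q)) * Real.log lo) := by
      simp only [G, hfun, hKdef]
      ring
    rw [hG]
    linarith
  -- IVT root x1 in [lo, w]
  have hcont : ContinuousOn (G q) (Set.Icc lo w) := fun z hz =>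
    (hasDerivAt_G q (lt_of_lt_of_le hlo_pos hz.1)).continuousAt.continuousWithinAt
  have h0mem : (0:ℝ) ∈ Set.Icc (G q lo) (G q w) := ⟨le_of_lt hGlo, by linarith⟩
  obtain ⟨x1, hx1mem, hx1⟩ := intermediate_value_Icc (le_of_lt hlo_lt_w) hcont h0mem
  have hx1_pos : 0 < x1 := lt_of_lt_of_le hlo_pos hx1mem.1
  have hx1_le_w : x1 ≤ w := hx1mem.2
  have hx1_le_1 : x1 ≤ 1 := by linarith
  set c5 := G q w with hc5def
  have hc5pos : 0 < c5 := lt_of_lt_of_le hc6pos hGw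
  -- derivative of the chord-shifted function
  have hphider : ∀ z : ℝ, 0 < z → HasDerivAt (fun u => G q u - c5 * (u - x1)) (Gd q z - c5) z :=
    fun z hz0 => (hasDerivAt_G q hz0).sub deriv_lin
  have hphiw : 0 < G q w - c5 * (w - x1) := by nlinarith
  -- chord bounds
  have hchordL : ∀ x', 0 < x' → x' ≤ x1 → G q x' ≤ c5 * (x' - x1) := by
    intro x' h1 h2
    by_contra hcon
    push_neg at hcon
    have h := min_endpoints_le (s := x') (t := w)
      (F := fun u => G q u - c5 * (u - x1)) (F' := fun u => Gd q u - c5)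
      (fun z hz => hphider z (lt_of_lt_of_le h1 hz.1))
      (fun y z hy hz hyz => by
        show Gd q z - c5 ≤ Gd q y - c5
        have := hGdanti y z (lt_of_lt_of_le h1 hy.1) hyz hz.2
        linarith)
      (y := x1) ⟨h2, hx1_le_w⟩
    have h' : min (G q x' - c5 * (x' - x1)) (G q w - c5 * (w - x1)) ≤
        G q x1 - c5 * (x1 - x1) := h
    have h0' : G q x1 - c5 * (x1 - x1) = 0 := by rw [hx1]; ring
    have hposmin : 0 < min (G q x' - c5 * (x' - x1)) (G q w - c5 * (w - x1)) :=
      lt_min (by linarith) hphiw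
    linarith
  have hchordR : ∀ x', x1 ≤ x' → x' ≤ w → c5 * (x' - x1) ≤ G q x' := by
    intro x' h1 h2
    have h := min_endpoints_le (s := x1) (t := w)
      (F := fun u => G q u - c5 * (u - x1)) (F' := fun u => Gd q u - c5)
      (fun z hz => hphider z (lt_of_lt_of_le hx1_pos hz.1))
      (fun y z hy hz hyz => by
        show Gd q z - c5 ≤ Gd q y - c5
        have := hGdanti y z (lt_of_lt_of_le hx1_pos hy.1) hyz hz.2
        linarith)
      (y := x') ⟨h1, h2⟩
    have h' : min (G q x1 - c5 * (x1 - x1)) (G q w - c5 * (w - x1)) ≤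
        G q x' - c5 * (x' - x1) := h
    have h0' : G q x1 - c5 * (x1 - x1) = 0 := by rw [hx1]; ring
    have hminge : 0 ≤ min (G q x1 - c5 * (x1 - x1)) (G q w - c5 * (w - x1)) :=
      le_min (le_of_eq h0'.symm) (le_of_lt hphiw)
    linarith
  -- assemble
  clear_value w m c3 K lo c5
  clear C1d hGdanti hgd_le hGlo hcont h0mem hphider hphiw hwdef haw haneg hmdef hc3def hKdef hlodef hc5def hx1mem hlo_lt_w hlo_le_1
  refine ⟨min (min 1 (2 * c3)) (min c5 (c3 ^ 3 / 2)), by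
    apply lt_min (lt_min one_pos (by linarith)) (lt_min hc5pos hc6pos), ?_⟩
  intro ε hε x hx hgx
  have hε0 : 0 < ε := hε.1
  have hε1 : ε < 1 := lt_of_lt_of_le hε.2 (le_trans (min_le_left _ _) (min_le_left _ _))
  have hε2c3 : ε < 2 * c3 := lt_of_lt_of_le hε.2 (le_trans (min_le_left _ _) (min_le_right _ _))
  have hεc5 : ε < c5 := lt_of_lt_of_le hε.2 (le_trans (min_le_right _ _) (min_le_left _ _))
  have hεc6 : ε < c3 ^ 3 / 2 := lt_of_lt_of_le hε.2 (le_trans (min_le_right _ _) (min_le_right _ _))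
  rcases le_total m x with hxm | hxm
  · -- quadratic region
    have hq2 := C1 x ⟨hxm, hx.2⟩
    have e1 : c3 * (q - x) ^ 2 / 2 ≤ ε ^ 3 := le_trans hq2 (le_trans (le_abs_self _) hgx)
    have e2 : ε ^ 3 ≤ 2 * c3 * ε ^ 2 := by nlinarith [sq_nonneg ε]
    have hsq : (q - x) ^ 2 ≤ (2 * ε) ^ 2 := by nlinarith [e1, e2, hc3pos]
    have hle := le_of_pow_le_pow_left₀ (by norm_num : (2:ℕ) ≠ 0) (by linarith : (0:ℝ) ≤ 2 * ε) hsq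
    exact ⟨q, ⟨hq0, le_of_lt hq1⟩, G_q q, by
      rw [abs_of_nonpos (by linarith [hx.2])]; linarith⟩
  · rcases le_total w x with hxw | hxw
    · -- excluded middle region
      exfalso
      have h1 : c3 ^ 3 / 2 ≤ G q x := le_trans hGm (hganti x m hxw hxm (le_of_lt hm_lt_q))
      have hε2 : ε ^ 2 ≤ 1 := by nlinarith
      have hε3 : ε ^ 3 ≤ ε := by nlinarith
      linarith [le_abs_self (G q x)]
    · -- chord region
      rcases le_total x x1 with h | h
      · have hc := hchordL x hx.1 h
        have h2 : c5 * (x1 - x) ≤ ε ^ 3 := by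
          have := neg_abs_le (G q x)
          nlinarith
        have hε2c5 : ε ^ 2 ≤ c5 := by nlinarith
        have hee : ε ^ 3 ≤ c5 * ε := by nlinarith
        have h3 : x1 - x ≤ ε := by nlinarith
        exact ⟨x1, ⟨hx1_pos, hx1_le_1⟩, hx1, by
          rw [abs_of_nonpos (by linarith)]; linarith⟩
      · have hc := hchordR x h hxw
        have h2 : c5 * (x - x1) ≤ ε ^ 3 := by
          have := le_abs_self (G q x)
          nlinarith
        have hε2c5 : ε ^ 2 ≤ c5 := by nlinarith
        have hee : ε ^ 3 ≤ c5 * ε := by nlinarith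
        have h3 : x - x1 ≤ ε := by nlinarith
        exact ⟨x1, ⟨hx1_pos, hx1_le_1⟩, hx1, by
          rw [abs_of_nonneg (by linarith)]; linarith⟩


set_option maxHeartbeats 1000000 in
lemma goodD (hw : q < -(q * Real.log q)) :
    ∃ δ > (0:ℝ), ∀ ε ∈ Set.Ioo (0:ℝ) δ, ∀ x ∈ Set.Icc q 1,
      |G q x| ≤ ε ^ 3 → ∃ x0 ∈ Set.Ioc (0:ℝ) 1, G q x0 = 0 ∧ |x - x0| ≤ 2 * ε := by
  have hw0 : 0 < -(q * Real.log q) := w_pos hq0 hq1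
  have hw1 : -(q * Real.log q) < 1 := w_lt_one hq0
  set w := -(q * Real.log q) with hwdef
  have haw : q * Real.log q = -w := by rw [hwdef]; ring
  set m := (q + w) / 2 with hmdef
  set c3 := (w - q) / 2 with hc3def
  have hc3pos : 0 < c3 := by rw [hc3def]; linarith
  have hq_lt_m : q < m := by rw [hmdef]; linarith
  have hm_lt_w : m < w := by rw [hmdef]; linarith
  have hm_pos : 0 < m := by linarith
  have hm_le_1 : m ≤ 1 := by linarith
  have hqm : m - q = c3 := by rw [hmdef, hc3def]; ring
  -- Gd ≤ -(c3 * (y - q)) on [q, m]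
  have D1d : ∀ y ∈ Set.Icc q m, Gd q y ≤ -(c3 * (y - q)) := by
    intro y hy
    have h := two_point_mono (s := q) (t := y) hy.1
      (F := fun z => -(Gd q z + c3 * (z - q))) (F' := fun z => -(Gdd q z + c3))
      (fun z hz => by
        have hz0 : 0 < z := lt_of_lt_of_le hq0 hz.1
        exact ((hasDerivAt_Gd q hz0).add (deriv_lin (c := c3) (d := q))).neg)
      (fun z hz => by
        show 0 ≤ -(Gdd q z + c3)
        have hz0 : 0 < z := lt_of_lt_of_le hq0 hz.1
        have hz1 : z ≤ 1 := by linarith [le_trans hz.2 hy.2]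
        have h1 : z + q * Real.log q ≤ 0 := by
          rw [haw]; linarith [le_trans hz.2 hy.2]
        have h2 := Gdd_le hq0 hq1 hz0 hz1 h1
        rw [haw] at h2
        linarith [le_trans hz.2 hy.2])
    have h' : -(Gd q q + c3 * (q - q)) ≤ -(Gd q y + c3 * (y - q)) := h
    rw [Gd_q hq0] at h'
    nlinarith [h']
  -- quadratic upper bound for G on [q, m]
  have D1 : ∀ y ∈ Set.Icc q m, G q y ≤ -(c3 * (y - q) ^ 2 / 2) := by
    intro y hy
    have h := two_point_mono (s := q) (t := y) hy.1
      (F := fun z => -(G q z + c3 * ((z - q) ^ 2 / 2)))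
      (F' := fun z => -(Gd q z + c3 * (z - q)))
      (fun z hz => by
        have hz0 : 0 < z := lt_of_lt_of_le hq0 hz.1
        exact ((hasDerivAt_G q hz0).add ((deriv_sq (c := q) (z := z)).const_mul c3)).neg)
      (fun z hz => by
        show 0 ≤ -(Gd q z + c3 * (z - q))
        have := D1d z ⟨hz.1, le_trans hz.2 hy.2⟩
        linarith)
    have h' : -(G q q + c3 * ((q - q) ^ 2 / 2)) ≤ -(G q y + c3 * ((y - q) ^ 2 / 2)) := h
    rw [G_q] at h'
    nlinarith [h']
  -- Gd antitone on (0, w]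
  have hGdanti : ∀ y z : ℝ, 0 < y → y ≤ z → z ≤ w → Gd q z ≤ Gd q y := by
    intro y z h1 h2 h3
    have h := two_point_mono (s := y) (t := z) h2
      (F := fun u => -(Gd q u)) (F' := fun u => -(Gdd q u))
      (fun u hu => (hasDerivAt_Gd q (lt_of_lt_of_le h1 hu.1)).neg)
      (fun u hu => by
        show 0 ≤ -(Gdd q u)
        have hu0 : 0 < u := lt_of_lt_of_le h1 hu.1
        have hu1 : u ≤ 1 := le_trans hu.2 (le_trans h3 (le_of_lt hw1))
        have h4 : u + q * Real.log q ≤ 0 := by rw [haw]; linarith [hu.2]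
        have := Gdd_le hq0 hq1 hu0 hu1 h4
        rw [haw] at this
        linarith [hu.2])
    have h' : -(Gd q y) ≤ -(Gd q z) := h
    linarith
  -- Gd monotone on [w, 1]
  have hGdmono : ∀ y z : ℝ, w ≤ y → y ≤ z → z ≤ 1 → Gd q y ≤ Gd q z := by
    intro y z h1 h2 h3
    exact two_point_mono (s := y) (t := z) h2 (F := Gd q) (F' := Gdd q)
      (fun u hu => hasDerivAt_Gd q (lt_of_lt_of_le hw0 (le_trans h1 hu.1)))
      (fun u hu => by
        have hu0 : 0 < u := lt_of_lt_of_le hw0 (le_trans h1 hu.1)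
        have hu1 : u ≤ 1 := le_trans hu.2 h3
        have h4 : 0 ≤ u + q * Real.log q := by rw [haw]; linarith [le_trans h1 hu.1]
        have := Gdd_ge hq0 hq1 hu0 hu1 h4
        linarith)
  -- G antitone on [q, w]
  have hganti : ∀ s t : ℝ, q ≤ s → s ≤ t → t ≤ w → G q t ≤ G q s := by
    intro s t h1 h2 h3
    have h := two_point_mono (s := s) (t := t) h2
      (F := fun z => -(G q z)) (F' := fun z => -(Gd q z))
      (fun z hz => (hasDerivAt_G q (lt_of_lt_of_le hq0 (le_trans h1 hz.1))).neg)
      (fun z hz => by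
        show 0 ≤ -(Gd q z)
        have h5 := hGdanti q z hq0 (le_trans h1 hz.1) (le_trans hz.2 h3)
        rw [Gd_q hq0] at h5
        linarith)
    have h' : -(G q s) ≤ -(G q t) := h
    linarith
  have hGm : G q m ≤ -(c3 ^ 3 / 2) := by
    have := D1 m ⟨le_of_lt hq_lt_m, le_refl m⟩
    rw [hqm] at this
    nlinarith [this]
  have hGw : G q w ≤ -(c3 ^ 3 / 2) :=
    le_trans (hganti m w (le_of_lt hq_lt_m) (le_of_lt hm_lt_w) (le_refl w)) hGm
  have hc6pos : 0 < c3 ^ 3 / 2 := by positivity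
  rcases lt_or_ge (G q 1) 0 with hG1 | hG1
  · -- no second root: the region [m, 1] is excluded
    set c7 := min (c3 ^ 3 / 2) (-(G q 1)) with hc7def
    have hc7pos : 0 < c7 := lt_min hc6pos (by linarith)
    have hmax : ∀ x ∈ Set.Icc w 1, G q x ≤ -c7 := by
      intro x hxmem
      have h := le_max_endpoints (s := w) (t := 1) (F := G q) (F' := Gd q)
        (fun z hz => hasDerivAt_G q (lt_of_lt_of_le hw0 hz.1))
        (fun y z hy hz hyz => hGdmono y z hy.1 hyz hz.2) hxmem
      have h2 : max (G q w) (G q 1) ≤ -c7 := by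
        apply max_le
        · have : c7 ≤ c3 ^ 3 / 2 := min_le_left _ _
          linarith
        · have : c7 ≤ -(G q 1) := min_le_right _ _
          linarith
      linarith
    have hc7a : c7 ≤ c3 ^ 3 / 2 := min_le_left _ _
    clear_value w m c3 c7
    clear D1d hGdanti hGdmono hwdef haw hmdef hc3def hc7def
    refine ⟨min (min 1 (2 * c3)) c7, lt_min (lt_min one_pos (by linarith)) hc7pos, ?_⟩
    intro ε hε x hx hgx
    have hε0 : 0 < ε := hε.1
    have hε1 : ε < 1 := lt_of_lt_of_le hε.2 (le_trans (min_le_left _ _) (min_le_left _ _))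
    have hε2c3 : ε < 2 * c3 := lt_of_lt_of_le hε.2 (le_trans (min_le_left _ _) (min_le_right _ _))
    have hεc7 : ε < c7 := lt_of_lt_of_le hε.2 (min_le_right _ _)
    rcases le_total x m with hxm | hxm
    · have hq2 := D1 x ⟨hx.1, hxm⟩
      have e1 : c3 * (x - q) ^ 2 / 2 ≤ ε ^ 3 := by
        have := neg_abs_le (G q x)
        linarith
      have e2 : ε ^ 3 ≤ 2 * c3 * ε ^ 2 := by nlinarith [sq_nonneg ε]
      have hsq : (x - q) ^ 2 ≤ (2 * ε) ^ 2 := by nlinarith [e1, e2, hc3pos]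
      have hle := le_of_pow_le_pow_left₀ (by norm_num : (2:ℕ) ≠ 0)
        (by linarith : (0:ℝ) ≤ 2 * ε) hsq
      exact ⟨q, ⟨hq0, le_of_lt hq1⟩, G_q q, by
        rw [abs_of_nonneg (by linarith [hx.1])]; linarith⟩
    · exfalso
      have h1 : G q x ≤ -c7 := by
        rcases le_total x w with hxw | hxw
        · linarith [hganti m x (le_of_lt hq_lt_m) hxm hxw, hGm, hc7a]
        · exact hmax x ⟨hxw, hx.2⟩
      have hε2 : ε ^ 2 ≤ 1 := by nlinarith
      have hε3 : ε ^ 3 ≤ ε := by nlinarith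
      linarith [neg_abs_le (G q x)]
  · -- second root x1 in [w, 1]
    have hcont : ContinuousOn (G q) (Set.Icc w 1) := fun z hz =>
      (hasDerivAt_G q (lt_of_lt_of_le hw0 hz.1)).continuousAt.continuousWithinAt
    have h0mem : (0:ℝ) ∈ Set.Icc (G q w) (G q 1) := ⟨by linarith, hG1⟩
    obtain ⟨x1, hx1mem, hx1⟩ := intermediate_value_Icc (le_of_lt hw1) hcont h0mem
    have hx1_ge_w : w ≤ x1 := hx1mem.1
    have hx1_le_1 : x1 ≤ 1 := hx1mem.2
    have hx1_pos : 0 < x1 := lt_of_lt_of_le hw0 hx1_ge_w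
    set c5 := -(G q w) with hc5def
    have hc5pos : 0 < c5 := by rw [hc5def]; linarith
    have hphider : ∀ z : ℝ, 0 < z →
        HasDerivAt (fun u => G q u - c5 * (u - x1)) (Gd q z - c5) z :=
      fun z hz0 => (hasDerivAt_G q hz0).sub deriv_lin
    have hphiw : G q w - c5 * (w - x1) < 0 := by nlinarith
    -- chord bounds on [w, 1]
    have hchordL : ∀ x', w ≤ x' → x' ≤ x1 → G q x' ≤ c5 * (x' - x1) := by
      intro x' h1 h2
      have h := le_max_endpoints (s := w) (t := x1)
        (F := fun u => G q u - c5 * (u - x1)) (F' := fun u => Gd q u - c5)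
        (fun z hz => hphider z (lt_of_lt_of_le hw0 hz.1))
        (fun y z hy hz hyz => by
          show Gd q y - c5 ≤ Gd q z - c5
          have := hGdmono y z hy.1 hyz (le_trans hz.2 hx1_le_1)
          linarith)
        (y := x') ⟨h1, h2⟩
      have h' : G q x' - c5 * (x' - x1) ≤
          max (G q w - c5 * (w - x1)) (G q x1 - c5 * (x1 - x1)) := h
      have h0' : G q x1 - c5 * (x1 - x1) = 0 := by rw [hx1]; ring
      have hmax0 : max (G q w - c5 * (w - x1)) (G q x1 - c5 * (x1 - x1)) ≤ 0 :=
        max_le (le_of_lt hphiw) (le_of_eq h0')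
      linarith
    have hchordR : ∀ x', x1 ≤ x' → x' ≤ 1 → c5 * (x' - x1) ≤ G q x' := by
      intro x' h1 h2
      by_contra hcon
      push_neg at hcon
      have h := le_max_endpoints (s := w) (t := x')
        (F := fun u => G q u - c5 * (u - x1)) (F' := fun u => Gd q u - c5)
        (fun z hz => hphider z (lt_of_lt_of_le hw0 hz.1))
        (fun y z hy hz hyz => by
          show Gd q y - c5 ≤ Gd q z - c5
          have := hGdmono y z hy.1 hyz (le_trans hz.2 h2)
          linarith)
        (y := x1) ⟨hx1_ge_w, h1⟩
      have h' : G q x1 - c5 * (x1 - x1) ≤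
          max (G q w - c5 * (w - x1)) (G q x' - c5 * (x' - x1)) := h
      have h0' : G q x1 - c5 * (x1 - x1) = 0 := by rw [hx1]; ring
      have hmaxneg : max (G q w - c5 * (w - x1)) (G q x' - c5 * (x' - x1)) < 0 :=
        max_lt hphiw (by linarith)
      linarith
    clear_value w m c3 c5
    clear D1d hGdanti hGdmono hwdef haw hmdef hc3def hc5def hphider hphiw hcont h0mem hx1mem
    refine ⟨min (min 1 (2 * c3)) (min c5 (c3 ^ 3 / 2)),
      lt_min (lt_min one_pos (by linarith)) (lt_min hc5pos hc6pos), ?_⟩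
    intro ε hε x hx hgx
    have hε0 : 0 < ε := hε.1
    have hε1 : ε < 1 := lt_of_lt_of_le hε.2 (le_trans (min_le_left _ _) (min_le_left _ _))
    have hε2c3 : ε < 2 * c3 := lt_of_lt_of_le hε.2 (le_trans (min_le_left _ _) (min_le_right _ _))
    have hεc5 : ε < c5 := lt_of_lt_of_le hε.2 (le_trans (min_le_right _ _) (min_le_left _ _))
    have hεc6 : ε < c3 ^ 3 / 2 := lt_of_lt_of_le hε.2 (le_trans (min_le_right _ _) (min_le_right _ _))
    rcases le_total x m with hxm | hxm
    · have hq2 := D1 x ⟨hx.1, hxm⟩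
      have e1 : c3 * (x - q) ^ 2 / 2 ≤ ε ^ 3 := by
        have := neg_abs_le (G q x)
        linarith
      have e2 : ε ^ 3 ≤ 2 * c3 * ε ^ 2 := by nlinarith [sq_nonneg ε]
      have hsq : (x - q) ^ 2 ≤ (2 * ε) ^ 2 := by nlinarith [e1, e2, hc3pos]
      have hle := le_of_pow_le_pow_left₀ (by norm_num : (2:ℕ) ≠ 0)
        (by linarith : (0:ℝ) ≤ 2 * ε) hsq
      exact ⟨q, ⟨hq0, le_of_lt hq1⟩, G_q q, by
        rw [abs_of_nonneg (by linarith [hx.1])]; linarith⟩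
    · rcases le_total x w with hxw | hxw
      · exfalso
        have h1 : G q x ≤ -(c3 ^ 3 / 2) :=
          le_trans (hganti m x (le_of_lt hq_lt_m) hxm hxw) hGm
        have hε2 : ε ^ 2 ≤ 1 := by nlinarith
        have hε3 : ε ^ 3 ≤ ε := by nlinarith
        linarith [neg_abs_le (G q x)]
      · rcases le_total x x1 with h | h
        · have hc := hchordL x hxw h
          have h2 : c5 * (x1 - x) ≤ ε ^ 3 := by
            have := neg_abs_le (G q x)
            nlinarith
          have hε2c5 : ε ^ 2 ≤ c5 := by nlinarith
          have hee : ε ^ 3 ≤ c5 * ε := by nlinarith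
          have h3 : x1 - x ≤ ε := by nlinarith
          exact ⟨x1, ⟨hx1_pos, hx1_le_1⟩, hx1, by
            rw [abs_of_nonpos (by linarith)]; linarith⟩
        · have hc := hchordR x h hx.2
          have h2 : c5 * (x - x1) ≤ ε ^ 3 := by
            have := le_abs_self (G q x)
            nlinarith
          have hε2c5 : ε ^ 2 ≤ c5 := by nlinarith
          have hee : ε ^ 3 ≤ c5 * ε := by nlinarith
          have h3 : x - x1 ≤ ε := by nlinarith
          exact ⟨x1, ⟨hx1_pos, hx1_le_1⟩, hx1, by
            rw [abs_of_nonneg (by linarith)]; linarith⟩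

end

/-- approximate solutions of the tangent-line equation are close to
exact solutions. -/
theorem statement13 (q : ℝ) (hq : q ∈ Set.Ioo (0:ℝ) 1) :
    ∃ C ε0 : ℝ, 0 < C ∧ 0 < ε0 ∧ ∀ ε : ℝ, ε ∈ Set.Ioo (0:ℝ) ε0 →
      ∀ x : ℝ, x ∈ Set.Ioc (0:ℝ) 1 →
        |hfun x - hfun q - q * Real.log q * (Real.log x - Real.log q)| ≤ ε ^ 3 →
        ∃ x0 : ℝ, x0 ∈ Set.Ioc (0:ℝ) 1 ∧
          hfun x0 = hfun q + q * Real.log q * (Real.log x0 - Real.log q) ∧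
          |x - x0| ≤ C * ε := by
  obtain ⟨hq0, hq1⟩ := hq
  obtain ⟨δR, hδR, hR⟩ : ∃ δ > (0:ℝ), ∀ ε ∈ Set.Ioo (0:ℝ) δ, ∀ x ∈ Set.Icc q 1,
      |G q x| ≤ ε ^ 3 → ∃ x0 ∈ Set.Ioc (0:ℝ) 1, G q x0 = 0 ∧ |x - x0| ≤ 2 * ε := by
    rcases le_or_gt (-(q * Real.log q)) q with h | h
    · exact goodA hq0 hq1 h
    · exact goodD hq0 hq1 h
  obtain ⟨δL, hδL, hL⟩ : ∃ δ > (0:ℝ), ∀ ε ∈ Set.Ioo (0:ℝ) δ, ∀ x ∈ Set.Ioc (0:ℝ) q,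
      |G q x| ≤ ε ^ 3 → ∃ x0 ∈ Set.Ioc (0:ℝ) 1, G q x0 = 0 ∧ |x - x0| ≤ 2 * ε := by
    rcases le_or_gt q (-(q * Real.log q)) with h | h
    · exact goodB hq0 hq1 h
    · exact goodC hq0 hq1 h
  refine ⟨2, min δL δR, two_pos, lt_min hδL hδR, ?_⟩
  intro ε hε x hx hg
  have hgG : |G q x| ≤ ε ^ 3 := hg
  rcases le_total x q with hxq | hxq
  · obtain ⟨x0, hx0mem, hx0, hbound⟩ :=
      hL ε ⟨hε.1, lt_of_lt_of_le hε.2 (min_le_left _ _)⟩ x ⟨hx.1, hxq⟩ hgG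
    refine ⟨x0, hx0mem, ?_, hbound⟩
    have h := hx0
    simp only [G] at h
    linarith
  · obtain ⟨x0, hx0mem, hx0, hbound⟩ :=
      hR ε ⟨hε.1, lt_of_lt_of_le hε.2 (min_le_right _ _)⟩ x ⟨hxq, hx.2⟩ hgG
    refine ⟨x0, hx0mem, ?_, hbound⟩
    have h := hx0
    simp only [G] at h
    linarith

end LowerTails
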